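/- Let b₁ > b₂ > 0 and μ ≥ 2. If c > b₁ + ((μ-2)/2)·b₂, then the empty (null) graph on μ nodes uniquely maximizes the social welfare W(g) = Σ_j [ d_j(b₁ - c) + Σ_{w : dist(j,w) > 1} b_{dist(j,w)} ], where b_i = b₂ for all i ≥ 2. -/

import Mathlib

/-- Social welfare of a graph. -/
noncomputable def socialWelfare {n : ℕ} (b : ℕ → ℝ) (c : ℝ)
    (G : SimpleGraph (Fin n)) : ℝ := by
  classical
  exact ∑ j, ((G.degree j : ℝ) * (b 1 - c) +
    ∑ w, if 1 < G.dist j w then b (G.dist j w) else 0)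

open Finset in
/-- A vertex at positive distance from `j` has a neighbor strictly closer to `j`. -/
lemma exists_step {n : ℕ} (G : SimpleGraph (Fin n)) (j w : Fin n)
    (h : 0 < G.dist j w) : ∃ x, G.Adj w x ∧ G.dist j x + 1 = G.dist j w := by
  have h' : G.dist w j ≠ 0 := by rw [SimpleGraph.dist_comm]; omega
  obtain ⟨p, hp⟩ := SimpleGraph.exists_walk_of_dist_ne_zero h'
  cases p with
  | nil => simp at h
  | cons hadj q =>
    rename_i x
    refine ⟨x, hadj, ?_⟩
    have h1 : G.dist x j ≤ q.length := SimpleGraph.dist_le q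
    have h2 : G.dist w j ≤ G.dist x j + 1 := by
      obtain ⟨r, hr⟩ := (q.reachable).exists_walk_length_eq_dist
      have := SimpleGraph.dist_le (SimpleGraph.Walk.cons hadj r)
      simpa [hr] using this
    have h3 : (SimpleGraph.Walk.cons hadj q).length = q.length + 1 := by simp
    rw [SimpleGraph.dist_comm (u := j) (v := x), SimpleGraph.dist_comm (u := j) (v := w)]
    omega

theorem stmt_6 (μ : ℕ) (hμ : 2 ≤ μ) (b : ℕ → ℝ) (c : ℝ)
    (h12 : b 1 > b 2) (h2 : b 2 > 0) (hb : ∀ i, 2 ≤ i → b i = b 2)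
    (hc : c > b 1 + (((μ : ℝ) - 2) / 2) * b 2) :
    ∀ G : SimpleGraph (Fin μ), G ≠ ⊥ →
      socialWelfare b c G < socialWelfare b c (⊥ : SimpleGraph (Fin μ)) := by
  classical
  intro G hG
  have hbot : socialWelfare b c (⊥ : SimpleGraph (Fin μ)) = 0 := by
    simp only [socialWelfare, SimpleGraph.dist_bot]
    norm_num
  rw [hbot]
  set E : ℕ := G.edgeFinset.card with hE
  have hE1 : 1 ≤ E := by
    rcases Finset.card_pos.2 (SimpleGraph.edgeFinset_nonempty.2 hG)  with h
    omega
  -- choose the step function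
  have step := exists_step G
  let nxt : Fin μ → Fin μ → Fin μ := fun j w =>
    if h : 0 < G.dist j w then (step j w h).choose else w
  have nxt_adj : ∀ j w, 0 < G.dist j w → G.Adj w (nxt j w) := by
    intro j w h; simp only [nxt, dif_pos h]; exact (step j w h).choose_spec.1
  have nxt_dist : ∀ j w, 0 < G.dist j w → G.dist j (nxt j w) + 1 = G.dist j w := by
    intro j w h; simp only [nxt, dif_pos h]; exact (step j w h).choose_spec.2
  -- cardinalities per vertex
  let r : Fin μ → ℕ := fun j => (Finset.univ.filter (fun w => 0 < G.dist j w)).card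
  let p : Fin μ → ℕ := fun j => (Finset.univ.filter (fun w => 1 < G.dist j w)).card
  have hr : ∀ j, r j = p j + G.degree j := by
    intro j
    have hsplit : Finset.univ.filter (fun w => 0 < G.dist j w)
        = Finset.univ.filter (fun w => 1 < G.dist j w)
          ∪ Finset.univ.filter (fun w => G.dist j w = 1) := by
      rw [← Finset.filter_or]
      apply Finset.filter_congr
      intro w _
      constructor <;> intro h <;> omega
    have hdisj : Disjoint (Finset.univ.filter (fun w => 1 < G.dist j w))
        (Finset.univ.filter (fun w => G.dist j w = 1)) := by
      rw [Finset.disjoint_left]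
      intro a ha hb
      simp only [Finset.mem_filter] at ha hb
      omega
    have hone : Finset.univ.filter (fun w => G.dist j w = 1) = G.neighborFinset j := by
      ext w
      simp [SimpleGraph.dist_eq_one_iff_adj, SimpleGraph.mem_neighborFinset]
    simp only [r, p]
    rw [hsplit, Finset.card_union_of_disjoint hdisj, hone,
      SimpleGraph.card_neighborFinset_eq_degree]
  -- the injection bound : ∑ r j ≤ μ * E
  have hinj : ∑ j, r j ≤ μ * E := by
    have hcard : ∑ j, r j = (Finset.univ.sigma
        (fun j : Fin μ => Finset.univ.filter (fun w => 0 < G.dist j w))).card := by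
      rw [Finset.card_sigma]
    rw [hcard]
    have := Finset.card_le_card_of_injOn
      (f := fun q : (Σ _ : Fin μ, Fin μ) => (q.1, s(q.2, nxt q.1 q.2)))
      (s := Finset.univ.sigma (fun j : Fin μ => Finset.univ.filter (fun w => 0 < G.dist j w)))
      (t := Finset.univ ×ˢ G.edgeFinset) ?_ ?_
    · calc _ ≤ (Finset.univ ×ˢ G.edgeFinset).card := this
        _ = μ * E := by
          rw [Finset.card_product, Finset.card_univ, Fintype.card_fin]
    · rintro ⟨j, w⟩ hq
      simp only [Finset.mem_coe, Finset.mem_sigma, Finset.mem_filter] at hq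
      simp only [Finset.mem_coe, Finset.mem_product, Finset.mem_univ, true_and, SimpleGraph.mem_edgeFinset,
        SimpleGraph.mem_edgeSet]
      exact nxt_adj j w hq.2.2
    · rintro ⟨j, w⟩ hq ⟨j', w'⟩ hq' heq
      simp only [Finset.mem_coe, Finset.mem_sigma, Finset.mem_filter] at hq hq'
      simp only [Prod.mk.injEq] at heq
      obtain ⟨hj, hs⟩ := heq
      subst hj
      have hd := nxt_dist j w hq.2.2
      have hd' := nxt_dist j w' hq'.2.2
      rw [Sym2.eq_iff] at hs
      rcases hs with ⟨h1, _⟩ | ⟨h1, h3⟩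
      · subst h1; rfl
      · exfalso; rw [← h1] at hd'; rw [h3] at hd; omega
  -- rewrite the welfare
  have hW : socialWelfare b c G
      = (∑ j, (G.degree j : ℝ)) * (b 1 - c) + (∑ j, (p j : ℝ)) * b 2 := by
    rw [socialWelfare, Finset.sum_add_distrib, ← Finset.sum_mul]
    congr 1
    rw [Finset.sum_mul]
    apply Finset.sum_congr rfl
    intro j _
    calc (∑ w, if 1 < G.dist j w then b (G.dist j w) else 0)
        = ∑ w ∈ Finset.univ.filter (fun w => 1 < G.dist j w), b (G.dist j w) :=
          (Finset.sum_filter _ _).symm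
      _ = ∑ w ∈ Finset.univ.filter (fun w => 1 < G.dist j w), b 2 := by
          apply Finset.sum_congr rfl
          intro w hw
          simp only [Finset.mem_filter] at hw
          exact hb _ hw.2
      _ = (p j : ℝ) * b 2 := by rw [Finset.sum_const, nsmul_eq_mul]
  have hdeg : (∑ j, (G.degree j : ℝ)) = 2 * E := by
    rw [← Nat.cast_sum]
    norm_cast
    exact G.sum_degrees_eq_twice_card_edges
  have hp : (∑ j, (p j : ℝ)) = ((∑ j, p j : ℕ) : ℝ) := by push_cast; ring
  -- final arithmetic
  have key : (∑ j, p j) + 2 * E ≤ μ * E := by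
    have : ∑ j, r j = (∑ j, p j) + ∑ j, G.degree j := by
      rw [← Finset.sum_add_distrib]
      exact Finset.sum_congr rfl (fun j _ => hr j)
    have hds : ∑ j, G.degree j = 2 * E := G.sum_degrees_eq_twice_card_edges
    omega
  rw [hW, hdeg, hp]
  have hkeyR : ((∑ j, p j : ℕ) : ℝ) + 2 * (E : ℝ) ≤ (μ : ℝ) * (E : ℝ) := by
    exact_mod_cast key
  have hER : (1 : ℝ) ≤ (E : ℝ) := by exact_mod_cast hE1
  have hPR : (0 : ℝ) ≤ ((∑ j, p j : ℕ) : ℝ) := Nat.cast_nonneg _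
  have hbc : b 1 - c < -(((μ : ℝ) - 2) / 2) * b 2 := by linarith
  nlinarith [mul_pos (lt_of_lt_of_le one_pos hER) h2,
    mul_le_mul_of_nonneg_right hkeyR (le_of_lt h2),
    mul_lt_mul_of_pos_left hbc (lt_of_lt_of_le one_pos hER)]
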